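/- Let V be a complex inner product space with Hermitian inner product ⟨·,·⟩, and let ⟨·,·⟩_ℝ = Re⟨·,·⟩ be the associated real inner product. Let n ≥ 1 and let e : Fin n → V be an orthonormal family with respect to ⟨·,·⟩_ℝ. Let G be the real Gram matrix (of size 2n × 2n, with respect to ⟨·,·⟩_ℝ) of the 2n vectors e₁, …, eₙ, i·e₁, …, i·eₙ. Then det G ≤ 1, with equality if and only if Im⟨eⱼ, eₖ⟩ = 0 for all j, k (i.e. the real span of e₁, …, eₙ is Lagrangian for the Kähler form ω(u,v) = Re⟨i·u, v⟩). -/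

import Mathlib

open scoped ComplexOrder

lemma amgm_aux' {n : ℕ} (x : Fin n → ℝ) (hx : ∀ i, 0 ≤ x i)
    (hsum : ∑ i, x i = n) :
    (∏ i, x i) ≤ 1 ∧ ((∏ i, x i) = 1 → ∀ i, x i = 1) := by
  have key : ∀ i, x i ≤ Real.exp (x i - 1) := fun i => by
    have := Real.add_one_le_exp (x i - 1); linarith
  have hexp : ∏ i : Fin n, Real.exp (x i - 1) = 1 := by
    rw [← Real.exp_sum]
    simp [Finset.sum_sub_distrib, hsum]
  have hle : (∏ i, x i) ≤ 1 := by
    rw [← hexp]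
    exact Finset.prod_le_prod (fun i _ => hx i) (fun i _ => key i)
  refine ⟨hle, fun hp i => ?_⟩
  by_contra hne
  have hpos : ∀ j, 0 < x j := by
    intro j
    rcases (hx j).lt_or_eq with h | h
    · exact h
    · exfalso
      have : (∏ i, x i) = 0 := Finset.prod_eq_zero (Finset.mem_univ j) h.symm
      rw [hp] at this; norm_num at this
  have hlt : (∏ i, x i) < ∏ i : Fin n, Real.exp (x i - 1) := by
    refine Finset.prod_lt_prod (fun j _ => hpos j) (fun j _ => key j) ⟨i, Finset.mem_univ i, ?_⟩
    have := Real.add_one_lt_exp (x := x i - 1) (by intro h; apply hne; linarith)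
    linarith
  rw [hexp, hp] at hlt
  exact lt_irrefl _ hlt

/-- For a family e₁,…,eₙ orthonormal with respect to the real inner product Re⟨·,·⟩ on a
complex inner product space, the real Gram determinant of e₁,…,eₙ,i·e₁,…,i·eₙ is at most 1,
with equality iff the real span of the eⱼ is Lagrangian (Im⟨eⱼ,eₖ⟩ = 0 for all j,k). -/
theorem gram_det_le_one_iff_lagrangian
    (V : Type*) [NormedAddCommGroup V] [InnerProductSpace ℂ V]
    (n : ℕ) (hn : 1 ≤ n)
    (e : Fin n → V)
    (he : ∀ j k : Fin n, (inner ℂ (e j) (e k) : ℂ).re = if j = k then 1 else 0) :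
    let v : Fin n ⊕ Fin n → V := Sum.elim e (fun j => Complex.I • e j)
    let G : Matrix (Fin n ⊕ Fin n) (Fin n ⊕ Fin n) ℝ :=
      Matrix.of fun j k => (inner ℂ (v j) (v k) : ℂ).re
    G.det ≤ 1 ∧ (G.det = 1 ↔ ∀ j k : Fin n, (inner ℂ (e j) (e k) : ℂ).im = 0) := by
  intro v G
  set A : Matrix (Fin n) (Fin n) ℝ := Matrix.of fun j k => (inner ℂ (e j) (e k) : ℂ).im with hA
  -- G as a block matrix
  have hG : G = Matrix.fromBlocks 1 (-A) A 1 := by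
    ext j k
    obtain j | j := j <;> obtain k | k := k
    · show (inner ℂ (e j) (e k) : ℂ).re = (1 : Matrix (Fin n) (Fin n) ℝ) j k
      rw [he j k, Matrix.one_apply]
    · show (inner ℂ (e j) (Complex.I • e k) : ℂ).re = (-A) j k
      rw [inner_smul_right]
      simp [hA, Complex.mul_re]
    · show (inner ℂ (Complex.I • e j) (e k) : ℂ).re = A j k
      rw [inner_smul_left]
      simp [hA, Complex.conj_I, Complex.mul_re]
    · show (inner ℂ (Complex.I • e j) (Complex.I • e k) : ℂ).re = (1 : Matrix (Fin n) (Fin n) ℝ) j k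
      rw [inner_smul_left, inner_smul_right, ← mul_assoc, Matrix.one_apply, ← he j k]
      simp [Complex.conj_I]
  have hGdet : G.det = (1 + A * A).det := by
    rw [hG, Matrix.det_fromBlocks_one₁₁, Matrix.mul_neg, sub_neg_eq_add]
  -- easy direction
  have hA0 : (∀ j k : Fin n, (inner ℂ (e j) (e k) : ℂ).im = 0) → G.det = 1 := by
    intro him
    have : A = 0 := by
      ext j k; simp [hA, him j k]
    rw [hGdet, this]
    simp
  -- the complex Gram matrix
  set B : Matrix (Fin n) (Fin n) ℂ := Matrix.of fun j k => (inner ℂ (e j) (e k) : ℂ) with hBdef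
  have hB : B.PosSemidef := by
    refine Matrix.posSemidef_iff_dotProduct_mulVec.mpr ⟨?_, ?_⟩
    · ext j k
      simp only [Matrix.conjTranspose_apply, hBdef, Matrix.of_apply]
      exact inner_conj_symm _ _
    · intro x
      have hdp : dotProduct (star x) (B.mulVec x)
          = (inner ℂ (∑ j, x j • e j) (∑ j, x j • e j) : ℂ) := by
        rw [sum_inner]
        refine Finset.sum_congr rfl fun j _ => ?_
        rw [inner_sum]
        simp only [dotProduct, Matrix.mulVec, Pi.star_apply, hBdef, Matrix.of_apply,
          inner_smul_left, inner_smul_right, Finset.mul_sum]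
        refine Finset.sum_congr rfl fun k _ => ?_
        rw [RCLike.star_def]
        ring
      rw [hdp]
      have hns := inner_self_eq_norm_sq_to_K (𝕜 := ℂ) (∑ j, x j • e j)
      rw [hns]
      exact pow_nonneg (RCLike.ofReal_nonneg.mpr (norm_nonneg _)) 2
  set lam : Fin n → ℝ := hB.1.eigenvalues with hlam
  have hlam_nonneg : ∀ i, 0 ≤ lam i := fun i => hB.eigenvalues_nonneg i
  set p : ℝ := ∏ i, lam i with hp
  have hBjj : ∀ j, B j j = 1 := by
    intro j
    apply Complex.ext
    · simpa [hBdef] using he j j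
    · show (inner ℂ (e j) (e j) : ℂ).im = 0
      rw [← Complex.conj_eq_iff_im]
      exact inner_conj_symm _ _
  have htraceC : B.trace = (n : ℂ) := by
    rw [Matrix.trace]
    simp [Matrix.diag, hBjj]
  have htraceC' : B.trace = ∑ i, (lam i : ℂ) := by
    conv_lhs => rw [hB.1.spectral_theorem]
    rw [Unitary.conjStarAlgAut_apply, Matrix.trace_mul_cycle,
      (Matrix.mem_unitaryGroup_iff').mp (hB.1.eigenvectorUnitary).2, one_mul,
      Matrix.trace_diagonal]
    rfl
  have htrace : ∑ i, lam i = n := by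
    have : ((∑ i, lam i : ℝ) : ℂ) = ((n : ℝ) : ℂ) := by
      push_cast
      rw [← htraceC', htraceC]
    exact_mod_cast this
  have hdetB : B.det = (p : ℂ) := by
    rw [hB.1.det_eq_prod_eigenvalues, hp]
    push_cast
    rfl
  -- complexified A
  set A' : Matrix (Fin n) (Fin n) ℂ := A.map Complex.ofReal with hA'
  have hBA : B = 1 + Complex.I • A' := by
    ext j k
    apply Complex.ext
    · simp [hBdef, hA', hA, Matrix.one_apply, he j k, apply_ite Complex.re]
    · simp [hBdef, hA', hA, Matrix.one_apply, apply_ite Complex.im]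
  have hC : B.map (starRingEnd ℂ) = 1 - Complex.I • A' := by
    ext j k
    show (starRingEnd ℂ) (B j k) = _
    rw [show B j k = (inner ℂ (e j) (e k) : ℂ) from rfl,
      show ((1 - Complex.I • A') j k : ℂ) = (1 : Matrix (Fin n) (Fin n) ℂ) j k
        - Complex.I * (A j k : ℝ) from rfl]
    apply Complex.ext
    · rw [Complex.conj_re]
      show (inner ℂ (e j) (e k) : ℂ).re = ((1 : Matrix (Fin n) (Fin n) ℂ) j k).re - (Complex.I * (A j k : ℝ)).re
      rw [he j k, Matrix.one_apply]
      simp [apply_ite Complex.re]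
    · rw [Complex.conj_im]
      show -(inner ℂ (e j) (e k) : ℂ).im = ((1 : Matrix (Fin n) (Fin n) ℂ) j k).im - (Complex.I * (A j k : ℝ)).im
      rw [Matrix.one_apply]
      simp [apply_ite Complex.im]
      rfl
  have hfact : (1 + Complex.I • A') * (1 - Complex.I • A') = 1 + A' * A' := by
    have hX : (Complex.I • A') * (Complex.I • A') = -(A' * A') := by
      rw [smul_mul_smul_comm, Complex.I_mul_I, neg_one_smul]
    simp only [mul_sub, add_mul, one_mul, mul_one, hX, sub_neg_eq_add]
    abel
  have hdetC : (B.map (starRingEnd ℂ)).det = (p : ℂ) := by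
    rw [show B.map ⇑(starRingEnd ℂ) = (starRingEnd ℂ).mapMatrix B from
      (RingHom.mapMatrix_apply _ _).symm, ← RingHom.map_det, hdetB, Complex.conj_ofReal]
  have hmap : (1 + A * A).map (Complex.ofRealHom : ℝ →+* ℂ) = 1 + A' * A' := by
    ext j k
    simp [Matrix.map_apply, Matrix.add_apply, Matrix.mul_apply, Matrix.one_apply, hA']
    split_ifs <;> simp
  have hdetG : G.det = p ^ 2 := by
    have hc : ((G.det : ℝ) : ℂ) = ((p ^ 2 : ℝ) : ℂ) := by
      rw [hGdet]
      calc (((1 + A * A).det : ℝ) : ℂ)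
          = ((1 + A * A).map (Complex.ofRealHom : ℝ →+* ℂ)).det :=
            (RingHom.map_det Complex.ofRealHom _).trans (by rw [RingHom.mapMatrix_apply])
        _ = (1 + A' * A').det := by rw [hmap]
        _ = ((1 + Complex.I • A') * (1 - Complex.I • A')).det := by rw [hfact]
        _ = (B * B.map (starRingEnd ℂ)).det := by rw [← hC, ← hBA]
        _ = ((p ^ 2 : ℝ) : ℂ) := by rw [Matrix.det_mul, hdetB, hdetC]; push_cast; ring
    exact_mod_cast hc
  obtain ⟨hple, heqc⟩ := amgm_aux' lam hlam_nonneg htrace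
  have hp0 : 0 ≤ p := Finset.prod_nonneg fun i _ => hlam_nonneg i
  refine ⟨by rw [hdetG]; nlinarith, ?_, hA0⟩
  intro h1 j k
  have hp1 : p = 1 := le_antisymm hple (by rw [hdetG] at h1; nlinarith)
  have hlam1 := heqc hp1
  have hB1 : B = 1 := by
    rw [hB.1.spectral_theorem]
    have hdiag : Matrix.diagonal (RCLike.ofReal ∘ lam) = (1 : Matrix (Fin n) (Fin n) ℂ) := by
      rw [show (RCLike.ofReal ∘ lam : Fin n → ℂ) = fun _ => (1 : ℂ) from
        funext fun i => by simp [hlam1 i], Matrix.diagonal_one]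
    rw [hdiag, Unitary.conjStarAlgAut_apply, mul_one]
    exact (Matrix.mem_unitaryGroup_iff).mp (hB.1.eigenvectorUnitary).2
  have hBjk : (inner ℂ (e j) (e k) : ℂ) = (1 : Matrix (Fin n) (Fin n) ℂ) j k := by
    rw [← hB1]; rfl
  rw [hBjk, Matrix.one_apply]
  split_ifs <;> simp
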